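/- The single-letter region S^{r.c.s.} is a closed subset of ℝ². -/
import Mathlib


open scoped BigOperators
open Filter

namespace RCS

/-- `p` is a probability mass function on the finite type `S`. -/
def IsPMF {S : Type*} [Fintype S] (p : S → ℝ) : Prop :=
  (∀ s, 0 ≤ p s) ∧ ∑ s, p s = 1

/-- `k` is a conditional probability kernel from `A` to `B`. -/
def IsKernel {A B : Type*} [Fintype B] (k : A → B → ℝ) : Prop :=
  ∀ a, IsPMF (k a)

/-- Total variation distance between two pmfs on a finite type. -/
noncomputable def TV {S : Type*} [Fintype S] (p q : S → ℝ) : ℝ :=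
  (1 / 2) * ∑ s, |p s - q s|

/-- Shannon mutual information (in nats) of a joint pmf given in curried form,
with the convention `0·log(0/x) = 0` (automatic since `Real.log 0 = 0`). -/
noncomputable def MI {U V : Type*} [Fintype U] [Fintype V] (p : U → V → ℝ) : ℝ :=
  ∑ u, ∑ v, p u v * Real.log (p u v / ((∑ v', p u v') * (∑ u', p u' v)))

/-- Markov chain `X − Z − W − Y` for a joint distribution `p` on `𝒳×𝒵×𝒲×𝒴`:
`p(x,z,w,y) = p_Z(z)·p_{X|Z}(x|z)·p_{W|Z}(w|z)·p_{Y|W}(y|w)` for some kernels. -/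
def MarkovXZWY {X Z W Y : Type*} [Fintype X] [Fintype Z] [Fintype W] [Fintype Y]
    (p : X → Z → W → Y → ℝ) : Prop :=
  ∃ (kX : Z → X → ℝ) (kW : Z → W → ℝ) (kY : W → Y → ℝ),
    IsKernel kX ∧ IsKernel kW ∧ IsKernel kY ∧
    ∀ x z w y, p x z w y =
      (∑ x', ∑ w', ∑ y', p x' z w' y') * kX z x * kW z w * kY w y

/-- The single-letter region `S^{r.c.s.}` for remote channel synthesis. -/
def Srcs {X Z Y : Type*} [Fintype X] [Fintype Z] [Fintype Y]
    (qXZ : X → Z → ℝ) (qXY : X → Y → ℝ) : Set (ℝ × ℝ) :=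
  { RRc | 0 ≤ RRc.1 ∧ 0 ≤ RRc.2 ∧
    ∃ (W : Type) (hW : Fintype W),
      letI := hW
      Fintype.card W ≤ Fintype.card Y * Fintype.card Z + 1 ∧
      ∃ p : X → Z → W → Y → ℝ,
        IsPMF (fun s : X × Z × W × Y => p s.1 s.2.1 s.2.2.1 s.2.2.2) ∧
        (∀ x z, (∑ w, ∑ y, p x z w y) = qXZ x z) ∧
        (∀ x y, (∑ z, ∑ w, p x z w y) = qXY x y) ∧
        MarkovXZWY p ∧
        MI (fun z w => ∑ x, ∑ y, p x z w y) ≤ RRc.1 ∧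
        MI (fun (xy : X × Y) w => ∑ z, p xy.1 z w xy.2) ≤ RRc.1 + RRc.2 }

/-! ### Auxiliary lemmas -/

lemma pmf_le_one {S : Type*} [Fintype S] {p : S → ℝ} (hp : IsPMF p) (s : S) : p s ≤ 1 := by
  rw [← hp.2]
  exact Finset.single_le_sum (fun i _ => hp.1 i) (Finset.mem_univ s)

lemma sum_embed {W W' : Type*} [Fintype W] [Fintype W'] (f : W ↪ W') (h : W' → ℝ)
    (hv : ∀ w', (∀ w, f w ≠ w') → h w' = 0) :
    ∑ w', h w' = ∑ w, h (f w) := by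
  classical
  have himg := Finset.sum_image (s := (Finset.univ : Finset W)) (f := h)
    (g := (f : W → W')) (fun x _ y _ hxy => f.injective hxy)
  rw [← himg]
  refine (Finset.sum_subset (Finset.subset_univ _) ?_).symm
  intro w' _ hw'
  refine hv w' fun w hw => hw' ?_
  exact Finset.mem_image.mpr ⟨w, Finset.mem_univ w, hw⟩

lemma MI_embed {U V V' : Type*} [Fintype U] [Fintype V] [Fintype V'] (f : V ↪ V')
    (p : U → V' → ℝ) (hv : ∀ u v', (∀ v, f v ≠ v') → p u v' = 0) :
    MI p = MI (fun u v => p u (f v)) := by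
  unfold MI
  refine Finset.sum_congr rfl fun u _ => ?_
  rw [show (∑ v', p u v') = ∑ v, p u (f v) from sum_embed f (p u) (hv u)]
  exact sum_embed f _ (fun v' hv' => by rw [hv u v' hv', zero_mul])

lemma MI_eq_tripleSum {U V : Type*} [Fintype U] [Fintype V] (p : U → V → ℝ)
    (hp : ∀ u v, 0 ≤ p u v) :
    MI p = (∑ u, ∑ v, p u v * Real.log (p u v))
      - (∑ u, (∑ v, p u v) * Real.log (∑ v, p u v))
      - (∑ v, (∑ u, p u v) * Real.log (∑ u, p u v)) := by
  have key : ∀ u v, p u v * Real.log (p u v / ((∑ v', p u v') * (∑ u', p u' v)))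
      = p u v * Real.log (p u v) - p u v * Real.log (∑ v', p u v')
        - p u v * Real.log (∑ u', p u' v) := by
    intro u v
    rcases eq_or_lt_of_le (hp u v) with h0 | hpos
    · simp [← h0]
    · have hu : 0 < ∑ v', p u v' :=
        lt_of_lt_of_le hpos (Finset.single_le_sum (fun i _ => hp u i) (Finset.mem_univ v))
      have hv' : 0 < ∑ u', p u' v :=
        lt_of_lt_of_le hpos (Finset.single_le_sum (fun i _ => hp i v) (Finset.mem_univ u))
      rw [Real.log_div hpos.ne' (mul_pos hu hv').ne', Real.log_mul hu.ne' hv'.ne']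
      ring
  unfold MI
  simp only [key, Finset.sum_sub_distrib]
  have h2 : (∑ u, ∑ v, p u v * Real.log (∑ v', p u v'))
      = ∑ u, (∑ v, p u v) * Real.log (∑ v, p u v) :=
    Finset.sum_congr rfl fun u _ => (Finset.sum_mul _ _ _).symm
  have h3 : (∑ u, ∑ v, p u v * Real.log (∑ u', p u' v))
      = ∑ v, (∑ u, p u v) * Real.log (∑ u, p u v) := by
    rw [Finset.sum_comm]
    exact Finset.sum_congr rfl fun v _ => (Finset.sum_mul _ _ _).symm
  rw [h2, h3]

lemma continuousOn_MI {U V : Type*} [Fintype U] [Fintype V] :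
    ContinuousOn (MI : (U → V → ℝ) → ℝ) {p | ∀ u v, 0 ≤ p u v} := by
  have hml : Continuous (fun x : ℝ => x * Real.log x) := Real.continuous_mul_log
  have hc : Continuous (fun p : U → V → ℝ =>
      (∑ u, ∑ v, p u v * Real.log (p u v))
        - (∑ u, (∑ v, p u v) * Real.log (∑ v, p u v))
        - (∑ v, (∑ u, p u v) * Real.log (∑ u, p u v))) := by
    refine Continuous.sub (Continuous.sub ?_ ?_) ?_
    · exact continuous_finset_sum _ fun u _ => continuous_finset_sum _ fun v _ =>
        hml.comp ((continuous_apply v).comp (continuous_apply u))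
    · exact continuous_finset_sum _ fun u _ =>
        hml.comp (continuous_finset_sum _ fun v _ => (continuous_apply v).comp (continuous_apply u))
    · exact continuous_finset_sum _ fun v _ =>
        hml.comp (continuous_finset_sum _ fun u _ => (continuous_apply v).comp (continuous_apply u))
  exact hc.continuousOn.congr fun p hp => MI_eq_tripleSum p hp

lemma isCompact_pmfSet {S : Type*} [Fintype S] : IsCompact {p : S → ℝ | IsPMF p} := by
  have hsub : {p : S → ℝ | IsPMF p} ⊆ Set.Icc 0 1 := fun p hp =>
    ⟨fun s => hp.1 s, fun s => pmf_le_one hp s⟩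
  refine IsCompact.of_isClosed_subset isCompact_Icc ?_ hsub
  have : {p : S → ℝ | IsPMF p} = (⋂ s, {p : S → ℝ | 0 ≤ p s}) ∩ {p : S → ℝ | ∑ s, p s = 1} := by
    ext p; simp [IsPMF, Set.mem_iInter]
  rw [this]
  exact IsClosed.inter
    (isClosed_iInter fun s => isClosed_le continuous_const (continuous_apply s))
    (isClosed_eq (continuous_finset_sum _ fun s _ => continuous_apply s) continuous_const)

lemma isCompact_kernelSet {A S : Type*} [Fintype A] [Fintype S] :
    IsCompact {k : A → S → ℝ | IsKernel k} := by
  have : {k : A → S → ℝ | IsKernel k} = Set.pi Set.univ (fun _ : A => {p : S → ℝ | IsPMF p}) := by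
    ext k; simp [IsKernel, Set.mem_pi]
  rw [this]
  exact isCompact_univ_pi fun _ => isCompact_pmfSet

/-- The factorization map for Markov chains. -/
def Phi {X Z W Y : Type*}
    (q : (Z → ℝ) × (Z → X → ℝ) × (Z → W → ℝ) × (W → Y → ℝ)) :
    X → Z → W → Y → ℝ :=
  fun x z w y => q.1 z * q.2.1 z x * q.2.2.1 z w * q.2.2.2 w y

def Kset (X Z W Y : Type*) [Fintype X] [Fintype Z] [Fintype W] [Fintype Y] :
    Set ((Z → ℝ) × (Z → X → ℝ) × (Z → W → ℝ) × (W → Y → ℝ)) :=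
  {q | IsPMF q.1 ∧ IsKernel q.2.1 ∧ IsKernel q.2.2.1 ∧ IsKernel q.2.2.2}

lemma isCompact_Kset (X Z W Y : Type*) [Fintype X] [Fintype Z] [Fintype W] [Fintype Y] :
    IsCompact (Kset X Z W Y) := by
  have : Kset X Z W Y = {p : Z → ℝ | IsPMF p} ×ˢ ({k : Z → X → ℝ | IsKernel k} ×ˢ
      ({k : Z → W → ℝ | IsKernel k} ×ˢ {k : W → Y → ℝ | IsKernel k})) := by
    ext q
    simp only [Kset, Set.mem_setOf_eq, Set.mem_prod]
  rw [this]
  exact isCompact_pmfSet.prod (isCompact_kernelSet.prod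
    (isCompact_kernelSet.prod isCompact_kernelSet))

lemma continuous_Phi {X Z W Y : Type*} :
    Continuous (Phi : ((Z → ℝ) × (Z → X → ℝ) × (Z → W → ℝ) × (W → Y → ℝ)) →
      (X → Z → W → Y → ℝ)) := by
  refine continuous_pi fun x => continuous_pi fun z => continuous_pi fun w =>
    continuous_pi fun y => ?_
  exact ((((continuous_apply z).comp continuous_fst).mul
      ((continuous_apply x).comp ((continuous_apply z).comp
        (continuous_fst.comp continuous_snd)))).mul
      ((continuous_apply w).comp ((continuous_apply z).comp
        (continuous_fst.comp (continuous_snd.comp continuous_snd))))).mul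
      ((continuous_apply y).comp ((continuous_apply w).comp
        (continuous_snd.comp (continuous_snd.comp continuous_snd))))

lemma Phi_nonneg {X Z W Y : Type*} [Fintype X] [Fintype Z] [Fintype W] [Fintype Y]
    {q : (Z → ℝ) × (Z → X → ℝ) × (Z → W → ℝ) × (W → Y → ℝ)} (hq : q ∈ Kset X Z W Y)
    (x : X) (z : Z) (w : W) (y : Y) : 0 ≤ Phi q x z w y :=
  mul_nonneg (mul_nonneg (mul_nonneg (hq.1.1 z) ((hq.2.1 z).1 x)) ((hq.2.2.1 z).1 w))
    ((hq.2.2.2 w).1 y)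

lemma sum_Phi {X Z W Y : Type*} [Fintype X] [Fintype Z] [Fintype W] [Fintype Y]
    {q : (Z → ℝ) × (Z → X → ℝ) × (Z → W → ℝ) × (W → Y → ℝ)} (hq : q ∈ Kset X Z W Y) (z : Z) :
    ∑ x, ∑ w, ∑ y, Phi q x z w y = q.1 z := by
  obtain ⟨h0, h1, h2, h3⟩ := hq
  have e3 : ∀ w : W, ∑ y, q.2.2.2 w y = 1 := fun w => (h3 w).2
  have e2 : ∑ w, q.2.2.1 z w = 1 := (h2 z).2
  have e1 : ∑ x, q.2.1 z x = 1 := (h1 z).2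
  calc ∑ x, ∑ w, ∑ y, Phi q x z w y
      = ∑ x, ∑ w, (q.1 z * q.2.1 z x * q.2.2.1 z w) * ∑ y, q.2.2.2 w y := by
        simp [Phi, Finset.mul_sum]
    _ = ∑ x, (q.1 z * q.2.1 z x) * ∑ w, q.2.2.1 z w := by
        simp only [e3, mul_one, ← Finset.mul_sum]
    _ = q.1 z * ∑ x, q.2.1 z x := by
        rw [e2]; simp only [mul_one, ← Finset.mul_sum]
    _ = q.1 z := by rw [e1, mul_one]


/-- the single-letter region `S^{r.c.s.}` is a closed subset of `ℝ²`. -/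
theorem srcs_isClosed
    {X Z Y : Type*} [Fintype X] [Fintype Z] [Fintype Y]
    (qXZ : X → Z → ℝ) (qXY : X → Y → ℝ)
    (hqXZ : IsPMF (fun s : X × Z => qXZ s.1 s.2))
    (hqXY : IsPMF (fun s : X × Y => qXY s.1 s.2)) :
    IsClosed (Srcs qXZ qXY) := by
  classical
  set n := Fintype.card Y * Fintype.card Z + 1 with hn
  set C : Set (X → Z → Fin n → Y → ℝ) :=
    (Phi '' Kset X Z (Fin n) Y) ∩
      ({p | ∀ x z, (∑ w, ∑ y, p x z w y) = qXZ x z} ∩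
       {p | ∀ x y, (∑ z, ∑ w, p x z w y) = qXY x y}) with hC
  -- compactness of C
  have hCc : IsCompact C := by
    refine ((isCompact_Kset X Z (Fin n) Y).image continuous_Phi).inter_right ?_
    refine IsClosed.inter ?_ ?_
    · have : {p : X → Z → Fin n → Y → ℝ | ∀ x z, (∑ w, ∑ y, p x z w y) = qXZ x z}
          = ⋂ x, ⋂ z, {p : X → Z → Fin n → Y → ℝ | (∑ w, ∑ y, p x z w y) = qXZ x z} := by
        ext p; simp [Set.mem_iInter]
      rw [this]
      exact isClosed_iInter fun x => isClosed_iInter fun z => isClosed_eq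
        (continuous_finset_sum _ fun w _ => continuous_finset_sum _ fun y _ =>
          (continuous_apply y).comp ((continuous_apply w).comp
            ((continuous_apply z).comp (continuous_apply x)))) continuous_const
    · have : {p : X → Z → Fin n → Y → ℝ | ∀ x y, (∑ z, ∑ w, p x z w y) = qXY x y}
          = ⋂ x, ⋂ y, {p : X → Z → Fin n → Y → ℝ | (∑ z, ∑ w, p x z w y) = qXY x y} := by
        ext p; simp [Set.mem_iInter]
      rw [this]
      exact isClosed_iInter fun x => isClosed_iInter fun y => isClosed_eq
        (continuous_finset_sum _ fun z _ => continuous_finset_sum _ fun w _ =>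
          (continuous_apply y).comp ((continuous_apply w).comp
            ((continuous_apply z).comp (continuous_apply x)))) continuous_const
  -- nonnegativity on C
  have hCpos : ∀ p ∈ C, ∀ x z w y, 0 ≤ p x z w y := by
    rintro p ⟨⟨q, hq, rfl⟩, -⟩ x z w y
    exact Phi_nonneg hq x z w y
  -- the two marginal maps
  set m1 : (X → Z → Fin n → Y → ℝ) → (Z → Fin n → ℝ) :=
    fun p z w => ∑ x, ∑ y, p x z w y with hm1
  set m2 : (X → Z → Fin n → Y → ℝ) → ((X × Y) → Fin n → ℝ) :=
    fun p xy w => ∑ z, p xy.1 z w xy.2 with hm2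
  have hm1c : Continuous m1 := by
    refine continuous_pi fun z => continuous_pi fun w => ?_
    exact continuous_finset_sum _ fun x _ => continuous_finset_sum _ fun y _ =>
      (continuous_apply y).comp ((continuous_apply w).comp
        ((continuous_apply z).comp (continuous_apply x)))
  have hm2c : Continuous m2 := by
    refine continuous_pi fun xy => continuous_pi fun w => ?_
    exact continuous_finset_sum _ fun z _ =>
      (continuous_apply xy.2).comp ((continuous_apply w).comp
        ((continuous_apply z).comp (continuous_apply xy.1)))
  have hMI1 : ContinuousOn (fun p => MI (m1 p)) C := by
    have h := ContinuousOn.comp (g := MI) (f := m1) (s := C)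
      (t := {q : Z → Fin n → ℝ | ∀ u v, 0 ≤ q u v}) continuousOn_MI hm1c.continuousOn
      (fun p hp z w => Finset.sum_nonneg fun x _ => Finset.sum_nonneg fun y _ =>
        hCpos p hp x z w y)
    exact h
  have hMI2 : ContinuousOn (fun p => MI (m2 p)) C := by
    have h := ContinuousOn.comp (g := MI) (f := m2) (s := C)
      (t := {q : (X × Y) → Fin n → ℝ | ∀ u v, 0 ≤ q u v}) continuousOn_MI hm2c.continuousOn
      (fun p hp xy w => Finset.sum_nonneg fun z _ => hCpos p hp xy.1 z w xy.2)
    exact h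
  haveI : CompactSpace C := isCompact_iff_compactSpace.mp hCc
  -- the key set equality
  set T : Set (C × (ℝ × ℝ)) := {cr | 0 ≤ cr.2.1 ∧ 0 ≤ cr.2.2 ∧
    MI (m1 (cr.1 : X → Z → Fin n → Y → ℝ)) ≤ cr.2.1 ∧
    MI (m2 (cr.1 : X → Z → Fin n → Y → ℝ)) ≤ cr.2.1 + cr.2.2} with hT
  have hmain : Srcs qXZ qXY = Prod.snd '' T := by
    ext r
    constructor
    · rintro ⟨hR, hRc, W, hW, hcard, p, hpmf, hXZ, hXY, ⟨kX, kW, kY, hkX, hkW, hkY, heq⟩,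
        hb1, hb2⟩
      -- W is nonempty
      have hWne : Nonempty W := by
        by_contra hne
        rw [not_nonempty_iff] at hne
        have h0 : ∀ x z, qXZ x z = 0 := fun x z => by rw [← hXZ x z]; simp
        have h1 := hqXZ.2
        simp [h0] at h1
      haveI : Inhabited W := Classical.inhabited_of_nonempty hWne
      -- embedding of W into Fin n
      obtain ⟨f⟩ : Nonempty (W ↪ Fin n) :=
        Function.Embedding.nonempty_of_card_le (by rw [Fintype.card_fin, hn]; exact hcard)
      set g : Fin n → W := fun w' => if h : ∃ w, f w = w' then h.choose else default with hg
      have hgf : ∀ w, g (f w) = w := by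
        intro w
        have hex : ∃ w0, f w0 = f w := ⟨w, rfl⟩
        show (if h : ∃ w0, f w0 = f w then h.choose else default) = w
        rw [dif_pos hex]
        exact f.injective hex.choose_spec
      have hp0 : ∀ x z w y, 0 ≤ p x z w y := fun x z w y => hpmf.1 (x, z, w, y)
      set qZ' : Z → ℝ := fun z => ∑ x, ∑ w, ∑ y, p x z w y with hqZ'
      set kW' : Z → Fin n → ℝ :=
        fun z w' => if ∃ w, f w = w' then kW z (g w') else 0 with hkW'
      set q' : (Z → ℝ) × (Z → X → ℝ) × (Z → Fin n → ℝ) × (Fin n → Y → ℝ) :=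
        (qZ', kX, kW', fun w' => kY (g w')) with hq'
      set p' : X → Z → Fin n → Y → ℝ := Phi q' with hp'
      have hkW'f : ∀ z w, kW' z (f w) = kW z w := by
        intro z w
        show (if ∃ w0, f w0 = f w then kW z (g (f w)) else 0) = kW z w
        rw [if_pos (⟨w, rfl⟩ : ∃ w0, f w0 = f w), hgf]
      have hkW'0 : ∀ z w', (∀ w, f w ≠ w') → kW' z w' = 0 := by
        intro z w' hw'
        show (if ∃ w, f w = w' then kW z (g w') else 0) = 0
        exact if_neg (fun h => match h with | ⟨w, hw⟩ => hw' w hw)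
      have hq'K : q' ∈ Kset X Z (Fin n) Y := by
        refine ⟨⟨fun z => Finset.sum_nonneg fun x _ => Finset.sum_nonneg fun w _ =>
          Finset.sum_nonneg fun y _ => hp0 x z w y, ?_⟩, hkX, ?_, fun w' => hkY (g w')⟩
        · -- total mass of qZ' is 1
          show (∑ z, ∑ x, ∑ w, ∑ y, p x z w y) = 1
          rw [Finset.sum_comm, ← hpmf.2]
          simp only [Fintype.sum_prod_type]
        · -- kW' is a kernel
          intro z
          constructor
          · intro w'
            show 0 ≤ if ∃ w, f w = w' then kW z (g w') else 0
            split
            · exact (hkW z).1 _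
            · exact le_refl 0
          · rw [show (∑ w', kW' z w') = ∑ w, kW' z (f w) from
              sum_embed f (kW' z) (fun w' hw' => hkW'0 z w' hw')]
            simp only [hkW'f]
            exact (hkW z).2
      have hp'f : ∀ x z w y, p' x z (f w) y = p x z w y := by
        intro x z w y
        show qZ' z * kX z x * kW' z (f w) * kY (g (f w)) y = p x z w y
        rw [hkW'f, hgf, heq x z w y]
      have hp'0 : ∀ x z w' y, (∀ w, f w ≠ w') → p' x z w' y = 0 := by
        intro x z w' y hw'
        show qZ' z * kX z x * kW' z w' * kY (g w') y = 0
        rw [hkW'0 z w' hw']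
        ring
      have hp'C : p' ∈ C := by
        refine ⟨⟨q', hq'K, hp'.symm⟩, ?_, ?_⟩
        · intro x z
          rw [show (∑ w', ∑ y, p' x z w' y) = ∑ w, ∑ y, p' x z (f w) y from
            sum_embed f _ (fun w' hw' => Finset.sum_eq_zero fun y _ => hp'0 x z w' y hw')]
          simp only [hp'f]
          exact hXZ x z
        · intro x y
          have hz : ∀ z : Z, (∑ w', p' x z w' y) = ∑ w, p x z w y := by
            intro z
            rw [show (∑ w', p' x z w' y) = ∑ w, p' x z (f w) y from
              sum_embed f _ (fun w' hw' => hp'0 x z w' y hw')]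
            simp only [hp'f]
          rw [Finset.sum_congr rfl fun z _ => hz z]
          exact hXY x y
      refine ⟨⟨⟨p', hp'C⟩, r⟩, ⟨hR, hRc, ?_, ?_⟩, rfl⟩
      · -- MI bound 1
        show MI (m1 p') ≤ r.1
        calc MI (m1 p')
            = MI (fun z w => ∑ x, ∑ y, p' x z (f w) y) :=
              MI_embed f (fun z w' => ∑ x, ∑ y, p' x z w' y)
                (fun z w' hw' => Finset.sum_eq_zero fun x _ =>
                  Finset.sum_eq_zero fun y _ => hp'0 x z w' y hw')
          _ = MI (fun z w => ∑ x, ∑ y, p x z w y) := by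
              congr 1
              funext z w
              exact Finset.sum_congr rfl fun x _ =>
                Finset.sum_congr rfl fun y _ => hp'f x z w y
          _ ≤ r.1 := hb1
      · -- MI bound 2
        show MI (m2 p') ≤ r.1 + r.2
        calc MI (m2 p')
            = MI (fun (xy : X × Y) w => ∑ z, p' xy.1 z (f w) xy.2) :=
              MI_embed f (fun (xy : X × Y) w' => ∑ z, p' xy.1 z w' xy.2)
                (fun xy w' hw' => Finset.sum_eq_zero fun z _ => hp'0 xy.1 z w' xy.2 hw')
          _ = MI (fun (xy : X × Y) w => ∑ z, p xy.1 z w xy.2) := by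
              congr 1
              funext xy w
              exact Finset.sum_congr rfl fun z _ => hp'f xy.1 z w xy.2
          _ ≤ r.1 + r.2 := hb2
    · rintro ⟨⟨⟨p, hpC⟩, r'⟩, ⟨hr1, hr2, hb1, hb2⟩, rfl⟩
      obtain ⟨⟨q, hqK, rfl⟩, hXZ, hXY⟩ := hpC
      refine ⟨hr1, hr2, Fin n, Fin.fintype n, ?_, Phi q, ⟨?_, ?_⟩, hXZ, hXY, ?_, hb1, hb2⟩
      · simp [hn]
      · intro s
        exact Phi_nonneg hqK s.1 s.2.1 s.2.2.1 s.2.2.2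
      · show (∑ s : X × Z × Fin n × Y, Phi q s.1 s.2.1 s.2.2.1 s.2.2.2) = 1
        have : (∑ s : X × Z × Fin n × Y, Phi q s.1 s.2.1 s.2.2.1 s.2.2.2)
            = ∑ x, ∑ z, ∑ w, ∑ y, Phi q x z w y := by
          simp only [Fintype.sum_prod_type]
        rw [this, Finset.sum_comm, Finset.sum_congr rfl fun z _ => sum_Phi hqK z]
        exact hqK.1.2
      · exact ⟨q.2.1, q.2.2.1, q.2.2.2, hqK.2.1, hqK.2.2.1, hqK.2.2.2, fun x z w y => by
          rw [show (∑ x', ∑ w', ∑ y', Phi q x' z w' y') = q.1 z from sum_Phi hqK z]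
          rfl⟩
  rw [hmain]
  apply isClosedMap_snd_of_compactSpace
  have h1 : Continuous fun cr : C × (ℝ × ℝ) =>
      MI (m1 (cr.1 : X → Z → Fin n → Y → ℝ)) := hMI1.restrict.comp continuous_fst
  have h2 : Continuous fun cr : C × (ℝ × ℝ) =>
      MI (m2 (cr.1 : X → Z → Fin n → Y → ℝ)) := hMI2.restrict.comp continuous_fst
  have hTeq : T = {cr : C × (ℝ × ℝ) | 0 ≤ cr.2.1} ∩ ({cr | 0 ≤ cr.2.2} ∩
      ({cr | MI (m1 (cr.1 : X → Z → Fin n → Y → ℝ)) ≤ cr.2.1} ∩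
       {cr | MI (m2 (cr.1 : X → Z → Fin n → Y → ℝ)) ≤ cr.2.1 + cr.2.2})) := rfl
  rw [hTeq]
  refine IsClosed.inter ?_ (IsClosed.inter ?_ (IsClosed.inter ?_ ?_))
  · exact isClosed_le continuous_const (continuous_fst.comp continuous_snd)
  · exact isClosed_le continuous_const (continuous_snd.comp continuous_snd)
  · exact isClosed_le h1 (continuous_fst.comp continuous_snd)
  · exact isClosed_le h2 ((continuous_fst.comp continuous_snd).add
      (continuous_snd.comp continuous_snd))

end RCS
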